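/- For every n ≥ 6, the asymmetric index of the wheel graph on n vertices satisfies ai(W_n) = 2. -/

import Mathlib

/-- A simple graph is *asymmetric* if its only automorphism is the identity. -/
def SimpleGraph.IsAsymmetric {V : Type*} (G : SimpleGraph V) : Prop :=
  ∀ f : G ≃g G, ∀ v : V, f v = v

/-- The *asymmetric index* `ai(G)`: the minimum, over all asymmetric graphs `G'` on the
same vertex set, of the number of edges in which `G` and `G'` differ (edges removed plus
edges added); `⊤` (infinity) if no asymmetric graph on the vertex set exists. -/
noncomputable def SimpleGraph.asymIndex {V : Type*} (G : SimpleGraph V) : ℕ∞ :=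
  sInf {n : ℕ∞ | ∃ G' : SimpleGraph V, G'.IsAsymmetric ∧
    n = (symmDiff G.edgeSet G'.edgeSet).encard}

/-- The wheel graph `W_n` on `n` vertices: a hub vertex (`none`) adjacent to each of the
`n - 1` rim vertices, and rim vertex `i` adjacent to rim vertex `j` iff
`i - j ≡ ±1 (mod n-1)`. -/
def SimpleGraph.wheelGraph (n : ℕ) : SimpleGraph (Option (ZMod (n - 1))) :=
  SimpleGraph.fromRel (fun x y =>
    (∃ a b, x = some a ∧ y = some b ∧ a - b = 1) ∨ x = none)

namespace WheelAux
open SimpleGraph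

/-- The wheel graph on a rim of size `m`. -/
def Wh (m : ℕ) : SimpleGraph (Option (ZMod m)) :=
  SimpleGraph.fromRel (fun x y =>
    (∃ a b, x = some a ∧ y = some b ∧ a - b = 1) ∨ x = none)

/-- The two edges we delete from the wheel. -/
def dS (m : ℕ) : Set (Sym2 (Option (ZMod m))) :=
  {s(some 0, some 1), s(none, some 0)}

/-- The modified (asymmetric) wheel. -/
def Wg (m : ℕ) : SimpleGraph (Option (ZMod m)) := (Wh m).deleteEdges (dS m)

variable {m : ℕ}

lemma wh_adj_some {a b : ZMod m} :
    (Wh m).Adj (some a) (some b) ↔ a ≠ b ∧ (a - b = 1 ∨ b - a = 1) := by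
  simp [Wh, SimpleGraph.fromRel_adj]

lemma wh_adj_none {w : Option (ZMod m)} :
    (Wh m).Adj none w ↔ ∃ b, w = some b := by
  constructor
  · intro h
    cases w with
    | none => exact absurd rfl h.ne
    | some b => exact ⟨b, rfl⟩
  · rintro ⟨b, rfl⟩
    simp [Wh, SimpleGraph.fromRel_adj]

lemma zc_inj {i j : ℕ} (hi : i < m) (hj : j < m) (h : i ≠ j) :
    (i : ZMod m) ≠ (j : ZMod m) := by
  intro hc
  apply h
  have := congrArg ZMod.val hc
  rwa [ZMod.val_cast_of_lt hi, ZMod.val_cast_of_lt hj] at this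

lemma two_ne_zero' (hm : 5 ≤ m) : (2 : ZMod m) ≠ 0 := by
  have := zc_inj (m := m) (i := 2) (j := 0) (by omega) (by omega) (by omega)
  simpa using this

lemma one_ne_zero' (hm : 5 ≤ m) : (1 : ZMod m) ≠ 0 := by
  have := zc_inj (m := m) (i := 1) (j := 0) (by omega) (by omega) (by omega)
  simpa using this

lemma neg_one_ne_one (hm : 5 ≤ m) : (-1 : ZMod m) ≠ 1 := by
  intro h
  apply two_ne_zero' hm
  calc (2 : ZMod m) = 1 + 1 := by ring
    _ = -1 + 1 := by rw [h]
    _ = 0 := by ring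

lemma wg_sub (hm : 5 ≤ m) {a : ZMod m} {w : Option (ZMod m)}
    (h : (Wg m).Adj (some a) w) :
    w = some (a - 1) ∨ w = some (a + 1) ∨ w = none := by
  have hw := (SimpleGraph.deleteEdges_adj.mp h).1
  cases w with
  | none => exact Or.inr (Or.inr rfl)
  | some b =>
    rcases (wh_adj_some.mp hw).2 with h1 | h1
    · exact Or.inl (by rw [show b = a - 1 by linear_combination -h1])
    · exact Or.inr (Or.inl (by rw [show b = a + 1 by linear_combination h1]))

lemma wg_adj_none (hm : 5 ≤ m) {w : Option (ZMod m)} :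
    (Wg m).Adj none w ↔ ∃ b, w = some b ∧ b ≠ 0 := by
  constructor
  · intro h
    obtain ⟨hw, hs⟩ := SimpleGraph.deleteEdges_adj.mp h
    obtain ⟨b, rfl⟩ := wh_adj_none.mp hw
    refine ⟨b, rfl, ?_⟩
    rintro rfl
    exact hs (by simp [dS])
  · rintro ⟨b, rfl, hb⟩
    refine SimpleGraph.deleteEdges_adj.mpr ⟨wh_adj_none.mpr ⟨b, rfl⟩, ?_⟩
    simp [dS, Sym2.eq_iff, hb]

lemma wg_adj_zero (hm : 5 ≤ m) {w : Option (ZMod m)} :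
    (Wg m).Adj (some 0) w ↔ w = some (-1) := by
  constructor
  · intro h
    obtain ⟨hw, hs⟩ := SimpleGraph.deleteEdges_adj.mp h
    cases w with
    | none => exact absurd (by simp [dS, Sym2.eq_iff]) hs
    | some b =>
      rcases (wh_adj_some.mp hw).2 with h1 | h1
      · have : b = -1 := by linear_combination -h1
        rw [this]
      · have : b = 1 := by linear_combination h1
        subst this
        exact absurd (by simp [dS]) hs
  · rintro rfl
    have hone := one_ne_zero' hm
    have hn1 := neg_one_ne_one hm
    refine SimpleGraph.deleteEdges_adj.mpr ⟨wh_adj_some.mpr ⟨?_, Or.inl (by ring)⟩, ?_⟩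
    · intro h
      exact hone (by linear_combination h)
    · intro hmem
      simp only [dS, Set.mem_insert_iff, Set.mem_singleton_iff, Sym2.eq_iff] at hmem
      rcases hmem with (⟨h1, h2⟩ | ⟨h1, h2⟩) | (⟨h1, h2⟩ | ⟨h1, h2⟩) <;> simp_all

lemma wg_adj_gen (hm : 5 ≤ m) {a : ZMod m} (h0 : a ≠ 0) (h1 : a ≠ 1)
    {w : Option (ZMod m)} :
    (Wg m).Adj (some a) w ↔ w = some (a - 1) ∨ w = some (a + 1) ∨ w = none := by
  constructor
  · exact wg_sub hm
  · have hone : (1 : ZMod m) ≠ 0 := one_ne_zero' hm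
    rintro (rfl | rfl | rfl)
    · refine SimpleGraph.deleteEdges_adj.mpr ⟨wh_adj_some.mpr ⟨?_, Or.inl (by ring)⟩, ?_⟩
      · intro h; exact hone (by linear_combination h)
      · intro hmem
        simp only [dS, Set.mem_insert_iff, Set.mem_singleton_iff, Sym2.eq_iff] at hmem
        rcases hmem with (⟨h1', h2⟩ | ⟨h1', h2⟩) | (⟨h1', h2⟩ | ⟨h1', h2⟩) <;> simp_all
    · refine SimpleGraph.deleteEdges_adj.mpr ⟨wh_adj_some.mpr ⟨?_, Or.inr (by ring)⟩, ?_⟩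
      · intro h; exact hone (by linear_combination -h)
      · intro hmem
        simp only [dS, Set.mem_insert_iff, Set.mem_singleton_iff, Sym2.eq_iff] at hmem
        rcases hmem with (⟨h1', h2⟩ | ⟨h1', h2⟩) | (⟨h1', h2⟩ | ⟨h1', h2⟩) <;> simp_all
    · refine SimpleGraph.deleteEdges_adj.mpr ⟨((Wh m).adj_symm (wh_adj_none.mpr ⟨a, rfl⟩)), ?_⟩
      intro hmem
      simp only [dS, Set.mem_insert_iff, Set.mem_singleton_iff, Sym2.eq_iff] at hmem
      rcases hmem with (⟨h1', h2⟩ | ⟨h1', h2⟩) | (⟨h1', h2⟩ | ⟨h1', h2⟩) <;> simp_all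

/-- The modified wheel is asymmetric. -/
theorem wg_asym (hm : 5 ≤ m) : (Wg m).IsAsymmetric := by
  haveI : NeZero m := ⟨by omega⟩
  intro f
  have zne : ∀ i j : ℕ, i < 5 → j < 5 → i ≠ j → (i : ZMod m) ≠ (j : ZMod m) :=
    fun i j hi hj h => zc_inj (by omega) (by omega) h
  -- Step 0 : f fixes the hub
  have hfnone : f none = none := by
    rcases hfn : f none with _ | a
    · rfl
    · exfalso
      have hne : ∀ i j : ℕ, i < 5 → j < 5 → i ≠ j →
          f (some (i : ZMod m)) ≠ f (some (j : ZMod m)) := by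
        intro i j hi hj h hc
        exact zne i j hi hj h (by simpa using f.injective hc)
      have hadj : ∀ i : ℕ, 0 < i → i < 5 →
          (Wg m).Adj (some a) (f (some (i : ZMod m))) := by
        intro i h0 h5
        have h1 : (Wg m).Adj none (some (i : ZMod m)) :=
          (wg_adj_none hm).mpr ⟨_, rfl, by simpa using zne i 0 h5 (by omega) (by omega)⟩
        have := f.map_adj_iff.mpr h1
        rwa [hfn] at this
      have m1 := wg_sub hm (hadj 1 (by omega) (by omega))
      have m2 := wg_sub hm (hadj 2 (by omega) (by omega))
      have m3 := wg_sub hm (hadj 3 (by omega) (by omega))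
      have m4 := wg_sub hm (hadj 4 (by omega) (by omega))
      have n12 := hne 1 2 (by omega) (by omega) (by omega)
      have n13 := hne 1 3 (by omega) (by omega) (by omega)
      have n14 := hne 1 4 (by omega) (by omega) (by omega)
      have n23 := hne 2 3 (by omega) (by omega) (by omega)
      have n24 := hne 2 4 (by omega) (by omega) (by omega)
      have n34 := hne 3 4 (by omega) (by omega) (by omega)
      rcases m1 with h1 | h1 | h1 <;> rcases m2 with h2 | h2 | h2 <;>
        rcases m3 with h3 | h3 | h3 <;> rcases m4 with h4 | h4 | h4 <;>
        first
          | exact n12 (h1.trans h2.symm)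
          | exact n13 (h1.trans h3.symm)
          | exact n14 (h1.trans h4.symm)
          | exact n23 (h2.trans h3.symm)
          | exact n24 (h2.trans h4.symm)
          | exact n34 (h3.trans h4.symm)
  -- Step A : f fixes the rim vertex 0
  have hf0 : f (some 0) = some 0 := by
    have h00 : ¬ (Wg m).Adj none (some (0 : ZMod m)) := by
      rw [wg_adj_none hm]
      rintro ⟨b, hb, hb0⟩
      exact hb0 (by injection hb.symm)
    have hna : ¬ (Wg m).Adj none (f (some 0)) := by
      rw [← hfnone]
      rw [f.map_adj_iff]
      exact h00
    rcases hfv : f (some 0) with _ | b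
    · exact absurd (f.injective (hfnone.trans hfv.symm)) (by simp)
    · rcases eq_or_ne b 0 with rfl | hb
      · rfl
      · exfalso
        exact hna (by rw [hfv]; exact (wg_adj_none hm).mpr ⟨b, rfl, hb⟩)
  -- Step B : f fixes the rim vertex -1
  have hfm1 : f (some (-1 : ZMod m)) = some (-1) := by
    have h := (wg_adj_zero hm (w := some (-1 : ZMod m))).mpr rfl
    have h2 : (Wg m).Adj (some 0) (f (some (-1 : ZMod m))) := by
      rw [← hf0, f.map_adj_iff]; exact h
    exact (wg_adj_zero hm).mp h2
  -- Step C : induction along the rim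
  have key : ∀ k : ℕ, k ≤ m - 2 →
      f (some (-1 - (k : ℕ) : ZMod m)) = some (-1 - (k : ℕ) : ZMod m) := by
    intro k
    induction k using Nat.strong_induction_on with
    | _ k IH =>
      intro hk
      match k, hk with
      | 0, _ => simpa using hfm1
      | (j+1), hk =>
        have hbj : f (some (-1 - (j : ℕ) : ZMod m)) = some (-1 - (j : ℕ) : ZMod m) :=
          IH j (by omega) (by omega)
        have hbj1 : f (some (-(j : ℕ) : ZMod m)) = some (-(j : ℕ) : ZMod m) := by
          match j with
          | 0 => simpa using hf0
          | (i+1) =>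
            have := IH i (by omega) (by omega)
            have hc : (-1 - (i : ℕ) : ZMod m) = -((i+1 : ℕ) : ZMod m) := by
              push_cast; ring
            rwa [hc] at this
        set b : ZMod m := -1 - (j : ℕ) with hbdef
        have hj1m : ((j+1 : ℕ) : ZMod m) ≠ 0 := by
          have := zc_inj (m := m) (i := j+1) (j := 0) (by omega) (by omega) (by omega)
          simpa using this
        have hj2m : ((j+2 : ℕ) : ZMod m) ≠ 0 := by
          have := zc_inj (m := m) (i := j+2) (j := 0) (by omega) (by omega) (by omega)
          simpa using this
        have hb0 : b ≠ 0 := by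
          intro h
          apply hj1m
          have : ((j+1 : ℕ) : ZMod m) = -b := by rw [hbdef]; push_cast; ring
          rw [this, h, neg_zero]
        have hb1 : b ≠ 1 := by
          intro h
          apply hj2m
          have : ((j+2 : ℕ) : ZMod m) = 1 - b := by rw [hbdef]; push_cast; ring
          rw [this, h, sub_self]
        have adjb : (Wg m).Adj (some b) (some (b - 1)) :=
          (wg_adj_gen hm hb0 hb1).mpr (Or.inl rfl)
        have h2 : (Wg m).Adj (some b) (f (some (b - 1))) := by
          have h3 := f.map_adj_iff.mpr adjb
          rwa [hbj] at h3
        have hcast : (-1 - ((j+1 : ℕ) : ZMod m)) = b - 1 := by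
          rw [hbdef]; push_cast; ring
        rcases wg_sub hm h2 with h | h | h
        · rw [hcast]; exact h
        · exfalso
          have hb1' : b + 1 = -(j : ℕ) := by rw [hbdef]; ring
          have : f (some (b - 1)) = f (some (b + 1)) := by
            rw [h, hb1', hbj1]
          have heq := f.injective this
          have : b - 1 = b + 1 := by injection heq
          exact two_ne_zero' hm (by linear_combination -this)
        · exfalso
          have : f (some (b - 1)) = f none := by rw [h, hfnone]
          exact Option.some_ne_none _ (f.injective this)
  -- Conclusion
  intro v
  rcases v with _ | a
  · exact hfnone
  · rcases eq_or_ne a 0 with rfl | ha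
    · exact hf0
    · have hval : a.val < m := ZMod.val_lt a
      have hval0 : a.val ≠ 0 := fun h => ha ((ZMod.val_eq_zero a).mp h)
      have hk : m - 1 - a.val ≤ m - 2 := by omega
      have hrepr : (-1 - ((m - 1 - a.val : ℕ) : ZMod m) : ZMod m) = a := by
        have h1 : ((m - 1 - a.val : ℕ) : ZMod m)
            = ((m : ℕ) : ZMod m) - ((1 + a.val : ℕ) : ZMod m) := by
          rw [← Nat.cast_sub (by omega)]
          congr 1
          omega
        have hv : ((a.val : ℕ) : ZMod m) = a := by
          rw [ZMod.natCast_val, ZMod.cast_id]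
        rw [h1, ZMod.natCast_self]
        push_cast [hv]
        ring
      rw [← hrepr]
      exact key _ hk

/-- The symmetric difference between the wheel and the modified wheel has size 2. -/
lemma wg_diff (hm : 5 ≤ m) :
    (symmDiff (Wh m).edgeSet (Wg m).edgeSet).encard = 2 := by
  have hsub : dS m ⊆ (Wh m).edgeSet := by
    intro e he
    rcases he with rfl | rfl
    · rw [SimpleGraph.mem_edgeSet, wh_adj_some]
      exact ⟨fun h => one_ne_zero' hm h.symm, Or.inr (by ring)⟩
    · exact SimpleGraph.mem_edgeSet _ |>.mpr (wh_adj_none.mpr ⟨0, rfl⟩)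
  have h1 : symmDiff (Wh m).edgeSet (Wg m).edgeSet = dS m := by
    rw [Wg, SimpleGraph.edgeSet_deleteEdges, Set.symmDiff_def]
    rw [Set.diff_diff_right_self, Set.inter_eq_self_of_subset_right hsub]
    rw [Set.diff_eq_empty.mpr Set.diff_subset, Set.union_empty]
  rw [h1]
  exact Set.encard_pair (by simp [Sym2.eq_iff])

/-- Rotation of the wheel. -/
def rotE (m : ℕ) : Option (ZMod m) ≃ Option (ZMod m) :=
  Equiv.optionCongr (Equiv.addRight (1 : ZMod m))

lemma rot_adj {x y : Option (ZMod m)} :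
    (Wh m).Adj (rotE m x) (rotE m y) ↔ (Wh m).Adj x y := by
  have hs : ∀ a b : ZMod m,
      (Wh m).Adj (some (a + 1)) (some (b + 1)) ↔ (Wh m).Adj (some a) (some b) := by
    intro a b
    rw [wh_adj_some, wh_adj_some]
    constructor
    · rintro ⟨h, h1 | h1⟩
      · exact ⟨fun hc => h (by rw [hc]), Or.inl (by linear_combination h1)⟩
      · exact ⟨fun hc => h (by rw [hc]), Or.inr (by linear_combination h1)⟩
    · rintro ⟨h, h1 | h1⟩
      · exact ⟨fun hc => h (by linear_combination hc), Or.inl (by linear_combination h1)⟩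
      · exact ⟨fun hc => h (by linear_combination hc), Or.inr (by linear_combination h1)⟩
  cases x with
  | none =>
    cases y with
    | none => simp [rotE]
    | some b =>
      simp only [rotE, Equiv.optionCongr_apply, Option.map_none, Option.map_some,
        Equiv.coe_addRight]
      rw [wh_adj_none, wh_adj_none]
      simp
  | some a =>
    cases y with
    | none =>
      simp only [rotE, Equiv.optionCongr_apply, Option.map_none, Option.map_some,
        Equiv.coe_addRight]
      rw [(Wh m).adj_comm, (Wh m).adj_comm (some a) none, wh_adj_none, wh_adj_none]
      simp
    | some b =>
      simp only [rotE, Equiv.optionCongr_apply, Option.map_some, Equiv.coe_addRight]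
      exact hs a b

/-- Rotation as a graph automorphism of the wheel. -/
def rotIso (m : ℕ) : (Wh m) ≃g (Wh m) :=
  { toEquiv := rotE m, map_rel_iff' := rot_adj }

/-- Reflection of the wheel (hub fixed, `t ↦ c - t` on the rim). -/
def refE (m : ℕ) (c : ZMod m) : Option (ZMod m) ≃ Option (ZMod m) :=
  Equiv.optionCongr (Function.Involutive.toPerm (fun t => c - t) (fun t => by ring_nf))

lemma refE_some (c a : ZMod m) : refE m c (some a) = some (c - a) := rfl

lemma refE_none (c : ZMod m) : refE m c none = none := rfl

lemma ref_invol (c : ZMod m) : ∀ v, refE m c (refE m c v) = v := by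
  intro v
  cases v with
  | none => rfl
  | some a => rw [refE_some, refE_some]; congr 1; ring

lemma ref_adj {c : ZMod m} {x y : Option (ZMod m)} :
    (Wh m).Adj (refE m c x) (refE m c y) ↔ (Wh m).Adj x y := by
  have hs : ∀ a b : ZMod m,
      (Wh m).Adj (some (c - a)) (some (c - b)) ↔ (Wh m).Adj (some a) (some b) := by
    intro a b
    rw [wh_adj_some, wh_adj_some]
    constructor
    · rintro ⟨h, h1 | h1⟩
      · exact ⟨fun hc => h (by rw [hc]), Or.inr (by linear_combination h1)⟩
      · exact ⟨fun hc => h (by rw [hc]), Or.inl (by linear_combination h1)⟩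
    · rintro ⟨h, h1 | h1⟩
      · exact ⟨fun hc => h (by linear_combination -hc), Or.inr (by linear_combination h1)⟩
      · exact ⟨fun hc => h (by linear_combination -hc), Or.inl (by linear_combination h1)⟩
  cases x with
  | none =>
    cases y with
    | none => simp
    | some b =>
      rw [refE_none, refE_some, wh_adj_none, wh_adj_none]
      simp
  | some a =>
    cases y with
    | none =>
      rw [refE_none, refE_some, (Wh m).adj_comm, (Wh m).adj_comm (some a) none,
        wh_adj_none, wh_adj_none]
      simp
    | some b =>
      rw [refE_some, refE_some]
      exact hs a b

lemma ref_map_mem {c : ZMod m} {p : Sym2 (Option (ZMod m))} :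
    Sym2.map (refE m c) p ∈ (Wh m).edgeSet ↔ p ∈ (Wh m).edgeSet := by
  induction p using Sym2.ind with
  | _ x y =>
    rw [Sym2.map_pair_eq, SimpleGraph.mem_edgeSet, SimpleGraph.mem_edgeSet]
    exact ref_adj

lemma ref_map_invol (c : ZMod m) (p : Sym2 (Option (ZMod m))) :
    Sym2.map (refE m c) (Sym2.map (refE m c) p) = p := by
  induction p using Sym2.ind with
  | _ x y => rw [Sym2.map_pair_eq, Sym2.map_pair_eq, ref_invol, ref_invol]

/-- A graph differing from the wheel in a single pair has a nontrivial automorphism. -/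
lemma flip_not_asym (hm : 5 ≤ m) (c : ZMod m) (e : Sym2 (Option (ZMod m)))
    (hfix : Sym2.map (refE m c) e = e) (G' : SimpleGraph (Option (ZMod m)))
    (hE' : G'.edgeSet = symmDiff (Wh m).edgeSet {e}) :
    ∃ f : G' ≃g G', ∃ v, f v ≠ v := by
  have hmem : ∀ p : Sym2 (Option (ZMod m)),
      Sym2.map (refE m c) p ∈ G'.edgeSet ↔ p ∈ G'.edgeSet := by
    intro p
    rw [hE', Set.mem_symmDiff, Set.mem_symmDiff]
    have h1 : Sym2.map (refE m c) p = e ↔ p = e := by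
      constructor
      · intro h
        have := congrArg (Sym2.map (refE m c)) h
        rwa [ref_map_invol, hfix] at this
      · rintro rfl; exact hfix
    simp only [Set.mem_singleton_iff, h1, ref_map_mem]
  refine ⟨{ toEquiv := refE m c, map_rel_iff' := ?_ }, ?_⟩
  · intro x y
    have := hmem s(x, y)
    rw [Sym2.map_pair_eq] at this
    rw [← SimpleGraph.mem_edgeSet, ← SimpleGraph.mem_edgeSet]
    exact this
  · rcases eq_or_ne c 0 with rfl | hc
    · refine ⟨some 1, ?_⟩
      simp only [RelIso.coe_fn_mk]
      rw [refE_some]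
      intro h
      have : (0 : ZMod m) - 1 = 1 := by injection h
      exact neg_one_ne_one hm (by linear_combination this)
    · refine ⟨some 0, ?_⟩
      simp only [RelIso.coe_fn_mk]
      rw [refE_some]
      intro h
      have : c - 0 = 0 := by injection h
      exact hc (by linear_combination this)

/-- Lower bound: any asymmetric graph differs from the wheel in at least two pairs. -/
lemma lower (hm : 5 ≤ m) (G' : SimpleGraph (Option (ZMod m)))
    (hA : G'.IsAsymmetric) :
    2 ≤ (symmDiff (Wh m).edgeSet G'.edgeSet).encard := by
  by_contra hlt
  push_neg at hlt
  have h1 : (symmDiff (Wh m).edgeSet G'.edgeSet).encard ≤ 1 := by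
    rw [← one_add_one_eq_two] at hlt
    exact (ENat.lt_add_one_iff (by simp)).mp hlt
  rcases Set.encard_le_one_iff_eq.mp h1 with h0 | ⟨e, he⟩
  · -- no difference : but the wheel has the rotation automorphism
    have hEq : (Wh m) = G' := by
      apply SimpleGraph.edgeSet_inj.mp
      exact symmDiff_eq_bot.mp (by rw [← Set.bot_eq_empty] at h0; exact h0)
    subst hEq
    have h01 := hA (rotIso m) (some 0)
    have : (0 : ZMod m) + 1 = 0 := by
      injection h01
    exact one_ne_zero' hm (by linear_combination this)
  · -- exactly one difference : there is a reflection automorphism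
    have hE' : G'.edgeSet = symmDiff (Wh m).edgeSet {e} := by
      rw [← he]
      exact (symmDiff_symmDiff_cancel_left _ _).symm
    have hediag : ¬ e.IsDiag := by
      have hmem : e ∈ symmDiff (Wh m).edgeSet G'.edgeSet := by
        rw [he]; exact Set.mem_singleton _
      rw [Set.mem_symmDiff] at hmem
      rcases hmem with ⟨h, _⟩ | ⟨h, _⟩
      · exact (Wh m).not_isDiag_of_mem_edgeSet h
      · exact G'.not_isDiag_of_mem_edgeSet h
    clear he h1 hlt
    revert hE' hediag
    induction e using Sym2.ind with
    | _ x y =>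
      intro hE' hediag
      have hxy : x ≠ y := fun h => hediag (by rw [h]; exact Sym2.mk_isDiag_iff.mpr rfl)
      have hflip : ∃ c : ZMod m, Sym2.map (refE m c) s(x, y) = s(x, y) := by
        cases x with
        | none =>
          cases y with
          | none => exact absurd rfl hxy
          | some a =>
            refine ⟨a + a, ?_⟩
            rw [Sym2.map_pair_eq, refE_none, refE_some,
              show a + a - a = a by ring]
        | some a =>
          cases y with
          | none =>
            refine ⟨a + a, ?_⟩
            rw [Sym2.map_pair_eq, refE_none, refE_some,
              show a + a - a = a by ring]
          | some b =>
            refine ⟨a + b, ?_⟩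
            rw [Sym2.map_pair_eq, refE_some, refE_some,
              show a + b - a = b by ring, show a + b - b = a by ring]
            exact Sym2.eq_swap
      obtain ⟨c, hfix⟩ := hflip
      obtain ⟨f, v, hf⟩ := flip_not_asym hm c _ hfix G' hE'
      exact hf (hA f v)

/-- The asymmetric index of the wheel with rim size `m ≥ 5` is 2. -/
theorem wh_ai (hm : 5 ≤ m) : (Wh m).asymIndex = 2 := by
  apply le_antisymm
  · exact sInf_le ⟨Wg m, wg_asym hm, (wg_diff hm).symm⟩
  · apply le_sInf
    rintro x ⟨G', hG', rfl⟩
    exact lower hm G' hG'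

end WheelAux

/-- For `n ≥ 6`, the asymmetric index of the wheel graph `W_n` is `2`. -/
theorem asymIndex_wheelGraph {n : ℕ} (hn : 6 ≤ n) :
    (SimpleGraph.wheelGraph n).asymIndex = 2 := by
  have h : SimpleGraph.wheelGraph n = WheelAux.Wh (n - 1) := rfl
  rw [h]
  exact WheelAux.wh_ai (by omega)
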